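/- The function ψ̂₁ satisfies ∂ψ̂₁/∂s(s,t) = −ψ̂₀(s,t) and (L̂_d ψ̂₁)(s,t) = 0 for all s ∈ ℝ and t > 0. -/

import Mathlib

open Real MeasureTheory Set

lemma gauss_int : Integrable (fun u : ℝ => Real.exp (-u ^ 2)) := by
  simpa using integrable_exp_neg_mul_sq (b := (1:ℝ)) one_pos

lemma erfc_repr (x : ℝ) : (∫ u in Set.Ioi x, Real.exp (-u ^ 2))
    = ((∫ u : ℝ, Real.exp (-u ^ 2)) - (∫ u in Set.Iic (0:ℝ), Real.exp (-u ^ 2)))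
      - ∫ u in (0:ℝ)..x, Real.exp (-u ^ 2) := by
  have h1 := intervalIntegral.integral_Iic_add_Ioi (μ := volume) (b := x)
      (gauss_int.integrableOn) (gauss_int.integrableOn)
  have h2 := intervalIntegral.integral_Iic_sub_Iic (μ := volume) (a := (0:ℝ)) (b := x)
      (gauss_int.integrableOn) (gauss_int.integrableOn)
  linarith [h1, h2]



/-- The complementary error function `erfc z = (2/√π) ∫_z^∞ e^{-u²} du`. -/
noncomputable def erfc (z : ℝ) : ℝ :=
  (2 / Real.sqrt Real.pi) * ∫ u in Set.Ioi z, Real.exp (-u ^ 2)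

/-- `ψ̂₀(s,t) = erfc((d(t)-s)/(2√(εt)))`. -/
noncomputable def psi0 (ε : ℝ) (d : ℝ → ℝ) (s t : ℝ) : ℝ :=
  erfc ((d t - s) / (2 * Real.sqrt (ε * t)))

/-- `Ê(s,t) = exp(-(s-d(t))²/(4εt))`. -/
noncomputable def Ehat (ε : ℝ) (d : ℝ → ℝ) (s t : ℝ) : ℝ :=
  Real.exp (-(s - d t) ^ 2 / (4 * ε * t))

/-- The operator `L̂_d F = -ε F_ss + â(d(t),t) F_s + F_t`. -/
noncomputable def Ld (ε : ℝ) (a : ℝ → ℝ → ℝ) (d : ℝ → ℝ) (F : ℝ → ℝ → ℝ) (s t : ℝ) : ℝ :=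
  -ε * iteratedDeriv 2 (fun x => F x t) s
    + a (d t) t * deriv (fun x => F x t) s
    + deriv (fun τ => F s τ) t

lemma erfc_hasDerivAt (z : ℝ) :
    HasDerivAt erfc (-(2 / Real.sqrt Real.pi) * Real.exp (-z ^ 2)) z := by
  have hfd : HasDerivAt (fun x : ℝ => ∫ u in (0:ℝ)..x, Real.exp (-u ^ 2))
      (Real.exp (-z ^ 2)) z :=
    intervalIntegral.integral_hasDerivAt_right gauss_int.intervalIntegrable
      gauss_int.aestronglyMeasurable.stronglyMeasurableAtFilter
      (Real.continuous_exp.comp (by continuity)).continuousAt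
  have h2 : HasDerivAt (fun x : ℝ => (2 / Real.sqrt Real.pi) *
      (((∫ u : ℝ, Real.exp (-u ^ 2)) - (∫ u in Set.Iic (0:ℝ), Real.exp (-u ^ 2)))
        - ∫ u in (0:ℝ)..x, Real.exp (-u ^ 2)))
      ((2 / Real.sqrt Real.pi) * (-Real.exp (-z ^ 2))) z :=
    (hfd.const_sub _).const_mul _
  have : erfc = fun x : ℝ => (2 / Real.sqrt Real.pi) *
      (((∫ u : ℝ, Real.exp (-u ^ 2)) - (∫ u in Set.Iic (0:ℝ), Real.exp (-u ^ 2)))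
        - ∫ u in (0:ℝ)..x, Real.exp (-u ^ 2)) := by
    funext x; rw [erfc, erfc_repr]
  rw [this]
  convert h2 using 1; ring

/-- the function `psih 1` satisfies `∂(psih 1)/∂s = -psi0` and
`Ld (psih 1) = 0` for all `s : ℝ` and `t > 0`. -/
theorem stmt_4
    (ε d₀ : ℝ) (hε : 0 < ε) (hd₀ : d₀ ∈ Set.Ioo (0 : ℝ) 1)
    (a : ℝ → ℝ → ℝ) (haC1 : ContDiff ℝ 1 (fun p : ℝ × ℝ => a p.1 p.2))
    (hapos : ∀ s t : ℝ, 0 ≤ t → 0 < a s t)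
    (d : ℝ → ℝ) (hdC1 : ContDiff ℝ 1 d)
    (hdODE : ∀ t : ℝ, 0 ≤ t → HasDerivAt d (a (d t) t) t)
    (hd0 : d 0 = d₀) :
    ∀ s t : ℝ, 0 < t →
      deriv (fun x => (d t - x) * psi0 ε d x t
          - 2 * Real.sqrt (ε * t / Real.pi) * Ehat ε d x t) s
        = -psi0 ε d s t ∧
      Ld ε a d
          (fun s' t' => (d t' - s') * psi0 ε d s' t'
            - 2 * Real.sqrt (ε * t' / Real.pi) * Ehat ε d s' t') s t
        = 0 := by
  intro s t ht
  have hπ : (0:ℝ) < Real.pi := Real.pi_pos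
  have hεt : 0 < ε * t := mul_pos hε ht
  set p := Real.sqrt Real.pi with hp
  have hp0 : 0 < p := Real.sqrt_pos.2 hπ
  set q := Real.sqrt (ε * t) with hqdef
  have hq0 : 0 < q := Real.sqrt_pos.2 hεt
  have hq2 : q ^ 2 = ε * t := Real.sq_sqrt hεt.le
  have hsq : Real.sqrt (ε * t / Real.pi) = q / p := by
    rw [Real.sqrt_div' _ hπ.le, ← hqdef, ← hp]
  have hEz : ∀ x : ℝ, Real.exp (-((d t - x) / (2 * q)) ^ 2) = Ehat ε d x t := by
    intro x
    rw [Ehat]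
    congr 1
    rw [div_pow, mul_pow, hq2]
    ring
  -- s-derivative of psi0
  have hpsi0s : ∀ x : ℝ, HasDerivAt (fun x => psi0 ε d x t)
      (Ehat ε d x t / (p * q)) x := by
    intro x
    have hlin : HasDerivAt (fun x : ℝ => (d t - x) / (2 * q)) (-(1 / (2 * q))) x := by
      have := ((hasDerivAt_id x).const_sub (d t)).div_const (2 * q)
      refine this.congr_deriv ?_
      ring
    have hcomp := (erfc_hasDerivAt ((d t - x) / (2 * q))).comp x hlin
    have : HasDerivAt (fun x : ℝ => psi0 ε d x t)
        (-(2 / p) * Real.exp (-((d t - x) / (2 * q)) ^ 2) * -(1 / (2 * q))) x := by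
      simp only [psi0, ← hqdef]
      exact hcomp
    convert this using 1
    rw [hEz x]
    field_simp
  -- s-derivative of Ehat
  have hEs : ∀ x : ℝ, HasDerivAt (fun x => Ehat ε d x t)
      (Ehat ε d x t * ((d t - x) / (2 * q ^ 2))) x := by
    intro x
    have hg : HasDerivAt (fun x : ℝ => -(x - d t) ^ 2 / (4 * ε * t))
        ((d t - x) / (2 * q ^ 2)) x := by
      have h1 := ((((hasDerivAt_id x).sub_const (d t)).pow 2).neg).div_const (4 * ε * t)
      refine h1.congr_deriv ?_
      rw [hq2]
      field_simp
      simp only [id]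
      ring
    have hcomp := (Real.hasDerivAt_exp (-(x - d t) ^ 2 / (4 * ε * t))).comp x hg
    exact hcomp
  -- s-derivative of psi1
  have hpsi1s : ∀ x : ℝ, HasDerivAt (fun x => (d t - x) * psi0 ε d x t
      - 2 * Real.sqrt (ε * t / Real.pi) * Ehat ε d x t) (-psi0 ε d x t) x := by
    intro x
    have h1 : HasDerivAt (fun x : ℝ => d t - x) (-1) x := by
      have := (hasDerivAt_id x).const_sub (d t); simpa using this
    have h2 := (h1.mul (hpsi0s x)).sub ((hEs x).const_mul (2 * Real.sqrt (ε * t / Real.pi)))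
    refine h2.congr_deriv ?_
    rw [hsq]
    field_simp
    ring
  refine ⟨(hpsi1s s).deriv, ?_⟩
  -- t-derivatives
  have A := a (d t) t
  have hd' : HasDerivAt d (a (d t) t) t := hdODE t ht.le
  have hsqrtt : HasDerivAt (fun τ : ℝ => Real.sqrt (ε * τ)) (ε / (2 * q)) t := by
    have h1 : HasDerivAt (fun τ : ℝ => ε * τ) ε t := by
      simpa using (hasDerivAt_id t).const_mul ε
    have := (Real.hasDerivAt_sqrt hεt.ne').comp t h1
    have h2 : HasDerivAt (fun τ : ℝ => Real.sqrt (ε * τ)) (1 / (2 * Real.sqrt (ε * t)) * ε) t := this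
    rw [← hqdef] at h2
    convert h2 using 1
    ring
  have hzt := (hd'.sub_const s).div (hsqrtt.const_mul 2)
      (show (2:ℝ) * Real.sqrt (ε * t) ≠ 0 by rw [← hqdef]; positivity)
  have hpsi0t := (erfc_hasDerivAt ((d t - s) / (2 * Real.sqrt (ε * t)))).comp t hzt
  have hwfun : (fun τ : ℝ => 2 * Real.sqrt (ε * τ / Real.pi))
      = fun τ : ℝ => 2 * (Real.sqrt (ε * τ) / p) := by
    funext τ; rw [Real.sqrt_div' _ hπ.le, ← hp]
  have hwt : HasDerivAt (fun τ : ℝ => 2 * Real.sqrt (ε * τ / Real.pi)) (ε / (p * q)) t := by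
    rw [hwfun]
    have := (hsqrtt.div_const p).const_mul 2
    refine this.congr_deriv ?_
    field_simp
  have hnum : HasDerivAt (fun τ : ℝ => -(s - d τ) ^ 2)
      (-(2 * (s - d t) ^ 1 * -(a (d t) t))) t := by
    exact (((hd'.const_sub s).pow 2).neg)
  have hden : HasDerivAt (fun τ : ℝ => 4 * ε * τ) (4 * ε) t := by
    simpa using (hasDerivAt_id t).const_mul (4 * ε)
  have hg := hnum.div hden (show (4:ℝ) * ε * t ≠ 0 by positivity)
  have hEt := (Real.hasDerivAt_exp (-(s - d t) ^ 2 / (4 * ε * t))).comp t hg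
  have hpsi1t := ((hd'.sub_const s).mul hpsi0t).sub (hwt.mul hEt)
  have hpsi1t' : HasDerivAt (fun τ : ℝ => (d τ - s) * psi0 ε d s τ
      - 2 * Real.sqrt (ε * τ / Real.pi) * Ehat ε d s τ) _ t := hpsi1t
  simp only [Ld]
  have e1 : deriv (fun x => (d t - x) * psi0 ε d x t
      - 2 * Real.sqrt (ε * t / Real.pi) * Ehat ε d x t) s = -psi0 ε d s t := (hpsi1s s).deriv
  have e2 : iteratedDeriv 2 (fun x => (d t - x) * psi0 ε d x t
      - 2 * Real.sqrt (ε * t / Real.pi) * Ehat ε d x t) s = -(Ehat ε d s t / (p * q)) := by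
    rw [iteratedDeriv_succ, iteratedDeriv_one]
    have hdd : deriv (fun x => (d t - x) * psi0 ε d x t
        - 2 * Real.sqrt (ε * t / Real.pi) * Ehat ε d x t)
        = fun x => -psi0 ε d x t := funext fun x => (hpsi1s x).deriv
    rw [hdd]
    exact ((hpsi0s s).neg).deriv
  rw [e1, e2, hpsi1t'.deriv]
  simp only [Function.comp, Pi.div_apply]
  have hE2 : Real.exp (-(s - d t) ^ 2 / (4 * ε * t)) = Ehat ε d s t := rfl
  rw [hE2]
  rw [show erfc ((d t - s) / (2 * Real.sqrt (ε * t))) = psi0 ε d s t from rfl]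
  rw [← hqdef, ← hp, hEz s, hsq]
  have hεq : ε = q ^ 2 / t := by rw [eq_div_iff ht.ne']; exact hq2.symm
  rw [hεq]
  field_simp
  ring
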